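/- Let m ≥ 3 and let x_1, ..., x_m be real numbers with 0 ≤ x_i ≤ 1 and ∑_{i=1}^m x_i = m - 1. If ∑_{i=1}^m arccos(x_i x_{i+1}) = π (indices mod m), then there exists an index i such that x_i = 0 and x_j = 1 for all j ≠ i. -/

import Mathlib

set_option maxHeartbeats 4000000

section Stmt1Aux
open Real Finset


lemma arccos_antitone {a b : ℝ} (h : a ≤ b) : Real.arccos b ≤ Real.arccos a := by
  rw [Real.arccos_eq_pi_div_two_sub_arcsin, Real.arccos_eq_pi_div_two_sub_arcsin]
  have := Real.monotone_arcsin h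
  linarith

lemma sum_shift (m : ℕ) (f : ℕ → ℝ) (hf : f m = f 0) :
    ∑ i ∈ Finset.range m, f (i + 1) = ∑ i ∈ Finset.range m, f i := by
  have h1 := Finset.sum_range_succ' f m
  have h2 := Finset.sum_range_succ f m
  rw [h2] at h1
  linarith

lemma arccos_concave {a b t : ℝ} (ha0 : 0 ≤ a) (ha1 : a ≤ 1) (hb0 : 0 ≤ b) (hb1 : b ≤ 1)
    (ht0 : 0 ≤ t) (ht1 : t ≤ 1) :
    (1 - t) * Real.arccos a + t * Real.arccos b ≤ Real.arccos ((1 - t) * a + t * b) := by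
  have hπ := Real.pi_pos
  have haβ : Real.arccos a ≤ π / 2 := Real.arccos_le_pi_div_two.mpr ha0
  have hbβ : Real.arccos b ≤ π / 2 := Real.arccos_le_pi_div_two.mpr hb0
  have ha' : (0:ℝ) ≤ Real.arccos a := Real.arccos_nonneg a
  have hb' : (0:ℝ) ≤ Real.arccos b := Real.arccos_nonneg b
  have hmem1 : Real.arccos a ∈ Set.Icc (-(π/2)) (π/2) := ⟨by linarith, haβ⟩
  have hmem2 : Real.arccos b ∈ Set.Icc (-(π/2)) (π/2) := ⟨by linarith, hbβ⟩
  have key := (strictConcaveOn_cos_Icc.concaveOn).2 hmem1 hmem2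
    (by linarith : (0:ℝ) ≤ 1 - t) ht0 (by ring)
  rw [smul_eq_mul, smul_eq_mul, smul_eq_mul, smul_eq_mul,
    Real.cos_arccos (by linarith) ha1, Real.cos_arccos (by linarith) hb1] at key
  have hc : 0 ≤ (1-t) * Real.arccos a + t * Real.arccos b := by nlinarith
  have hc2 : (1-t) * Real.arccos a + t * Real.arccos b ≤ π := by nlinarith
  calc (1-t) * Real.arccos a + t * Real.arccos b
      = Real.arccos (Real.cos ((1-t) * Real.arccos a + t * Real.arccos b)) :=
        (Real.arccos_cos hc hc2).symm
    _ ≤ Real.arccos ((1-t)*a + t*b) := arccos_antitone key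

lemma arccos_one_sub_two_sq {t : ℝ} (h0 : 0 ≤ t) (h1 : t ≤ 1) :
    Real.arccos (1 - 2 * t ^ 2) = 2 * Real.arcsin t := by
  have h2 : Real.cos (2 * Real.arcsin t) = 1 - 2 * t ^ 2 := by
    rw [Real.cos_two_mul, Real.cos_arcsin,
      Real.sq_sqrt (by nlinarith : (0:ℝ) ≤ 1 - t ^ 2)]
    ring
  rw [← h2, Real.arccos_cos]
  · linarith [Real.arcsin_nonneg.mpr h0]
  · linarith [Real.arcsin_le_pi_div_two t]

lemma sqrt3_ub : Real.sqrt 3 ≤ 1.7321 := by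
  nlinarith [Real.sq_sqrt (show (0:ℝ) ≤ 3 by norm_num), Real.sqrt_nonneg 3]

lemma sqrt3_lb : (1.732:ℝ) ≤ Real.sqrt 3 := by
  nlinarith [Real.sq_sqrt (show (0:ℝ) ≤ 3 by norm_num), Real.sqrt_nonneg 3]

-- L1 : Jordan-type sharp bound on [0, π/6]
lemma sin_ge_L1 {θ : ℝ} (h0 : 0 ≤ θ) (h1 : θ ≤ π / 6) : 3 * θ ≤ π * Real.sin θ := by
  have hπl := Real.pi_gt_d6
  have hπu := Real.pi_lt_d6
  rcases eq_or_lt_of_le h0 with h | h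
  · simp [← h]
  rcases le_or_gt θ 0.42 with hc | hc
  · have hs : θ - θ^3/4 < Real.sin θ := by
      have := Real.sin_gt_sub_cube h; nlinarith [pow_pos h 3]
    have hθ2 : θ^2 ≤ 0.1764 := by nlinarith
    have e1 : π * (θ - θ^3/4) ≤ π * Real.sin θ :=
      mul_le_mul_of_nonneg_left hs.le Real.pi_pos.le
    have e2 : π*θ ≤ 3.141593*θ := mul_le_mul_of_nonneg_right hπu.le h.le
    have e3 : 3.141592*θ ≤ π*θ := mul_le_mul_of_nonneg_right hπl.le h.le
    have e4 : θ^2 * (π*θ) ≤ 0.1764 * (π*θ) :=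
      mul_le_mul_of_nonneg_right hθ2 (mul_nonneg Real.pi_pos.le h.le)
    nlinarith [e1, e2, e3, e4, mul_pos Real.pi_pos h]
  · have hy0 : 0 ≤ π/6 - θ := by linarith
    have hy1 : π/6 - θ ≤ 0.1036 := by linarith
    set y := π/6 - θ with hyd
    have hθy : θ = π/6 - y := by linarith
    have hsin : Real.sin θ = 1/2 * Real.cos y - Real.sqrt 3 / 2 * Real.sin y := by
      rw [hθy, Real.sin_sub, Real.sin_pi_div_six, Real.cos_pi_div_six]
    have hcy : 1 - y^2/2 ≤ Real.cos y := Real.one_sub_sq_div_two_le_cos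
    have hsy : Real.sin y ≤ y := Real.sin_le hy0
    have h3u := sqrt3_ub
    have h3l := sqrt3_lb
    have h3n := Real.sqrt_nonneg 3
    have hps : π * Real.sqrt 3 ≤ 5.4418 := by nlinarith
    have hsinlb : 1/2 - y^2/4 - Real.sqrt 3 / 2 * y ≤ Real.sin θ := by
      rw [hsin]
      have : Real.sqrt 3 / 2 * Real.sin y ≤ Real.sqrt 3 / 2 * y :=
        mul_le_mul_of_nonneg_left hsy (by positivity)
      nlinarith
    have hmul : π * (1/2 - y^2/4 - Real.sqrt 3 / 2 * y) ≤ π * Real.sin θ :=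
      mul_le_mul_of_nonneg_left hsinlb Real.pi_pos.le
    -- π*(1/2 - y²/4 - (√3/2) y) ≥ 3*(π/6 - y)  ⟺  3y ≥ π y²/4 + (π√3/2) y
    have hpy : π * y ≤ 0.3256 := by nlinarith
    have hpyy : π * y^2 ≤ 0.3256 * y := by nlinarith [mul_le_mul_of_nonneg_right hpy hy0]
    have hfin : π*(y^2/4) + (π*Real.sqrt 3/2)*y ≤ 3*y := by
      have e5 : (π*Real.sqrt 3)*y ≤ 5.4418*y := mul_le_mul_of_nonneg_right hps hy0
      linarith
    nlinarith [hmul, hfin]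

-- L2 : (π - 2h) sin² h < h on (0, π/6)
lemma L2 {h : ℝ} (h0 : 0 < h) (h1 : h < π / 6) : (π - 2*h) * Real.sin h ^ 2 < h := by
  have hπl := Real.pi_gt_d6
  have hπu := Real.pi_lt_d6
  have hsp : 0 ≤ Real.sin h := Real.sin_nonneg_of_nonneg_of_le_pi h0.le (by linarith)
  rcases le_or_gt h 0.4 with hc | hc
  · have hs : Real.sin h < h := Real.sin_lt h0
    have hsq : Real.sin h ^ 2 < h^2 := by nlinarith
    have hpos : 0 < π - 2*h := by linarith
    have e1 : (π - 2*h) * Real.sin h ^ 2 < (π - 2*h) * h^2 :=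
      mul_lt_mul_of_pos_left hsq hpos
    -- (π - 2h) h² ≤ h  ⟺  (π-2h) h ≤ 1
    have e2 : (π - 2*h) * h ≤ 1 := by nlinarith [mul_le_mul_of_nonneg_right hπu.le h0.le, sq_nonneg (h - 2/5)]
    nlinarith [mul_le_mul_of_nonneg_right e2 h0.le]
  · have hy0 : 0 < π/6 - h := by linarith
    have hy1 : π/6 - h ≤ 0.1236 := by linarith
    set y := π/6 - h with hyd
    have hhy : h = π/6 - y := by linarith
    have hsin : Real.sin h = 1/2 * Real.cos y - Real.sqrt 3 / 2 * Real.sin y := by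
      rw [hhy, Real.sin_sub, Real.sin_pi_div_six, Real.cos_pi_div_six]
    have h3u := sqrt3_ub
    have h3l := sqrt3_lb
    have h3n := Real.sqrt_nonneg 3
    have hsy : y - y^3/4 < Real.sin y := by
      have := Real.sin_gt_sub_cube hy0; nlinarith [pow_pos hy0 3]
    have hcy : Real.cos y ≤ 1 := Real.cos_le_one y
    -- sin h ≤ 1/2 - 0.8626 y
    have hub : Real.sin h ≤ 1/2 - 0.8626 * y := by
      rw [hsin]
      have e1 : Real.sqrt 3 / 2 * (y - y^3/4) ≤ Real.sqrt 3 / 2 * Real.sin y :=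
        mul_le_mul_of_nonneg_left hsy.le (by positivity)
      -- √3/2 * (y - y³/4) ≥ 0.8626 y  ⟺  (√3/2 - 0.8626) y ≥ (√3/8) y³
      have e2 : 0.8626 * y ≤ Real.sqrt 3 / 2 * (y - y^3/4) := by
        have hyy : y^2 ≤ 0.01528 := by nlinarith
        nlinarith [mul_le_mul_of_nonneg_right hyy hy0.le, mul_nonneg hy0.le hy0.le]
      nlinarith
    have hb0 : 0 ≤ 1/2 - 0.8626 * y := by linarith
    have hsq : Real.sin h ^ 2 ≤ (1/2 - 0.8626 * y)^2 := by
      have := pow_le_pow_left₀ hsp hub 2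
      simpa using this
    have hpos : 0 < π - 2*h := by linarith
    have e3 : (π - 2*h) * Real.sin h ^2 ≤ (π - 2*h) * (1/2 - 0.8626*y)^2 :=
      mul_le_mul_of_nonneg_left hsq (by linarith)
    -- (2π/3 + 2y)(1/2 - 0.8626 y)² < π/6 - y
    have e4 : (π - 2*h) * (1/2 - 0.8626*y)^2 < π/6 - y := by
      rw [hhy]
      nlinarith [mul_le_mul_of_nonneg_right hπu.le hy0.le, mul_le_mul_of_nonneg_right hπl.le hy0.le,
        mul_le_mul_of_nonneg_right hπu.le (mul_nonneg hy0.le hy0.le),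
        mul_le_mul_of_nonneg_right hπl.le (mul_nonneg hy0.le hy0.le),
        mul_le_mul_of_nonneg_right hy1 (mul_nonneg hy0.le hy0.le),
        mul_le_mul_of_nonneg_right hy1 hy0.le, mul_nonneg hy0.le hy0.le]
    linarith

-- H1 : π u < (1+u) arccos (1-u) for 0 < u < 1/2
lemma H1 {u : ℝ} (h0 : 0 < u) (h1 : u < 1/2) : π * u < (1 + u) * Real.arccos (1 - u) := by
  have hπl := Real.pi_gt_d6
  set t := Real.arccos (1 - u) with htd
  have hct : Real.cos t = 1 - u := Real.cos_arccos (by linarith) (by linarith)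
  have ht0 : 0 < t := Real.arccos_pos.mpr (by linarith)
  have htp : t < π/3 := by
    have h13 : Real.arccos (1-u) < Real.arccos (1/2) := by
      apply Real.strictAntiOn_arccos ⟨by norm_num, by norm_num⟩ ⟨by linarith, by linarith⟩
      linarith
    have h12 : Real.arccos (1/2 : ℝ) = π/3 := by
      rw [show (1/2 : ℝ) = Real.cos (π/3) by rw [Real.cos_pi_div_three]]
      exact Real.arccos_cos (by positivity) (by linarith)
    rw [h12] at h13
    exact h13
  have hid : Real.cos t = 1 - 2 * Real.sin (t/2)^2 := by
    have hh1 : Real.cos (2*(t/2)) = 2 * Real.cos (t/2)^2 - 1 := Real.cos_two_mul (t/2)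
    have hh2 : Real.sin (t/2)^2 + Real.cos (t/2)^2 = 1 := Real.sin_sq_add_cos_sq (t/2)
    have hh3 : (2:ℝ)*(t/2) = t := by ring
    rw [hh3] at hh1
    linarith
  have hu2 : u = 2 * Real.sin (t/2)^2 := by rw [hct] at hid; linarith
  have hL2 := L2 (h := t/2) (by linarith) (by linarith)
  -- (π - t) sin(t/2)² < t/2
  have : (π - 2*(t/2)) = π - t := by ring
  rw [this] at hL2
  nlinarith [hL2]

lemma arcsin_le_lin {s : ℝ} (h0 : 0 ≤ s) (h1 : s ≤ 1/2) : Real.arcsin s ≤ π/3 * s := by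
  have hπ := Real.pi_pos
  have hθ6 : Real.arcsin s ≤ π/6 := by
    have hm : Real.arcsin s ≤ Real.arcsin (1/2) := Real.monotone_arcsin (by linarith)
    have h12 : Real.arcsin (1/2 : ℝ) = π/6 := by
      rw [show (1/2 : ℝ) = Real.sin (π/6) by rw [Real.sin_pi_div_six]]
      exact Real.arcsin_sin (by linarith) (by linarith)
    linarith
  have hθ0 : 0 ≤ Real.arcsin s := Real.arcsin_nonneg.mpr h0
  have hkey := sin_ge_L1 hθ0 hθ6
  rw [Real.sin_arcsin (by linarith) (by linarith)] at hkey
  linarith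

lemma claim1 {s : ℝ} (h0 : 0 < s) (h1 : s ≤ 1/2) :
    2 * Real.arcsin s < Real.arccos (1 - 3*s/2) := by
  have hid : Real.arccos (1 - 2*s^2) = 2 * Real.arcsin s :=
    arccos_one_sub_two_sq h0.le (by linarith)
  rw [← hid]
  apply Real.strictAntiOn_arccos ⟨by nlinarith, by nlinarith⟩ ⟨by nlinarith, by nlinarith⟩
  nlinarith

lemma claim2 {s : ℝ} (h0 : 0 < s) (h1 : s ≤ 1/2) :
    (2 - s) * Real.arcsin s < Real.arccos (1 - 3*s/4) := by
  have hπu := Real.pi_lt_d6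
  have hπ := Real.pi_pos
  set t := Real.sqrt (3*s/8) with htd
  have ht0 : 0 ≤ t := Real.sqrt_nonneg _
  have ht2 : t^2 = 3*s/8 := Real.sq_sqrt (by linarith)
  have ht1 : t ≤ 1 := by nlinarith
  have hid : Real.arccos (1 - 3*s/4) = 2 * Real.arcsin t := by
    rw [show 1 - 3*s/4 = 1 - 2*t^2 by rw [ht2]; ring]
    exact arccos_one_sub_two_sq ht0 ht1
  rw [hid]
  have harcsin : t ≤ Real.arcsin t := by
    nth_rewrite 1 [← Real.sin_arcsin (by linarith) ht1]
    exact Real.sin_le (Real.arcsin_nonneg.mpr ht0)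
  have hub : (2-s) * Real.arcsin s ≤ (2-s) * (π/3*s) :=
    mul_le_mul_of_nonneg_left (arcsin_le_lin h0.le h1) (by linarith)
  have hA0 : 0 ≤ (2-s) * (π/3*s) := by
    apply mul_nonneg (by linarith)
    positivity
  have hA2 : ((2-s) * (π/3*s))^2 < 4 * t^2 := by
    rw [ht2]
    -- (π²/9) s² (2-s)² < 3s/2
    have hp2 : π^2 < 9.8697 := by nlinarith
    have hfac : s*(2-s)^2 ≤ 9/8 := by nlinarith [sq_nonneg (s - 1/2), mul_nonneg h0.le h0.le]
    nlinarith [mul_pos h0 h0, sq_nonneg (2-s), mul_nonneg (mul_nonneg h0.le h0.le) (sq_nonneg (2-s)),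
      mul_le_mul_of_nonneg_left hfac (le_of_lt (mul_pos (mul_pos hπ hπ) h0)),
      mul_le_mul_of_nonneg_right hp2.le (mul_nonneg h0.le (sq_nonneg (2-s)))]
  have hkey : (2-s) * (π/3*s) < 2*t := by nlinarith
  linarith

end Stmt1Aux

section
open Real Finset

/-- Equality case of the optimization inequality: if the cyclic sum of
`arccos (x i * x (i+1))` equals `π`, then some `x i = 0` and all other
`x j = 1`. -/
theorem stmt1 (m : ℕ) (hm : 3 ≤ m) (x : ℕ → ℝ)
    (hper : ∀ i, x (i + m) = x i)
    (h0 : ∀ i, 0 ≤ x i) (h1 : ∀ i, x i ≤ 1)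
    (hsum : ∑ i ∈ Finset.range m, x i = m - 1)
    (heq : ∑ i ∈ Finset.range m, Real.arccos (x i * x (i + 1)) = Real.pi) :
    ∃ i < m, x i = 0 ∧ ∀ j < m, j ≠ i → x j = 1 := by
  classical
  have hm0 : 0 < m := by omega
  have hxm : x m = x 0 := by simpa using hper 0
  obtain ⟨u, hud⟩ : ∃ u : ℕ → ℝ, ∀ i, u i = 1 - x i := ⟨fun i => 1 - x i, fun _ => rfl⟩
  obtain ⟨c, hcd⟩ : ∃ c : ℕ → ℝ, ∀ i, c i = Real.arccos (x i * x (i + 1)) :=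
    ⟨fun i => Real.arccos (x i * x (i + 1)), fun _ => rfl⟩
  have heqc : ∑ i ∈ Finset.range m, c i = π := by
    rw [Finset.sum_congr rfl (fun i _ => hcd i)]; exact heq
  have hu0 : ∀ i, 0 ≤ u i := fun i => by rw [hud]; linarith [h1 i]
  have hu1 : ∀ i, u i ≤ 1 := fun i => by rw [hud]; linarith [h0 i]
  have huper : ∀ i, u (i + m) = u i := fun i => by rw [hud, hud, hper i]
  have hum : u m = u 0 := by simpa using huper 0
  have husum : ∑ i ∈ Finset.range m, u i = 1 := by
    rw [Finset.sum_congr rfl (fun i _ => hud i)]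
    rw [Finset.sum_sub_distrib, Finset.sum_const, Finset.card_range, hsum, nsmul_eq_mul, mul_one]
    ring
  have husum' : ∑ i ∈ Finset.range m, u (i + 1) = 1 := by
    rw [sum_shift m u hum]; exact husum
  have hsum3 : ∀ a b j : ℕ, a < m → b < m → j < m → a ≠ b → a ≠ j → b ≠ j →
      u a + u b + u j ≤ 1 := by
    intro a b j ha hb hj hab haj hbj
    have hsub : ({a, b, j} : Finset ℕ) ⊆ Finset.range m := by
      intro z hz
      simp only [Finset.mem_insert, Finset.mem_singleton] at hz
      rcases hz with rfl | rfl | rfl <;> simp [Finset.mem_range, ha, hb, hj]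
    have hle := Finset.sum_le_sum_of_subset_of_nonneg hsub (fun i _ _ => hu0 i)
    rw [Finset.sum_insert (by simp [hab, haj]), Finset.sum_insert (by simp [hbj]),
      Finset.sum_singleton, husum] at hle
    linarith
  have hsum2 : ∀ a j : ℕ, a < m → j < m → a ≠ j → u a + u j ≤ 1 := by
    intro a j ha hj haj
    have hsub : ({a, j} : Finset ℕ) ⊆ Finset.range m := by
      intro z hz
      simp only [Finset.mem_insert, Finset.mem_singleton] at hz
      rcases hz with rfl | rfl <;> simp [Finset.mem_range, ha, hj]
    have hle := Finset.sum_le_sum_of_subset_of_nonneg hsub (fun i _ _ => hu0 i)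
    rw [Finset.sum_insert (by simp [haj]), Finset.sum_singleton, husum] at hle
    linarith
  by_cases hex : ∃ k, k < m ∧ x k ≤ 1/2
  · obtain ⟨k, hkm, hkha⟩ := hex
    have hs0 : 0 ≤ x k := h0 k
    have hs1 : x k ≤ 1 := h1 k
    obtain ⟨k1, hk1d⟩ : ∃ k1, k1 = if k = 0 then m - 1 else k - 1 := ⟨_, rfl⟩
    obtain ⟨k2, hk2d⟩ : ∃ k2, k2 = if k + 1 = m then 0 else k + 1 := ⟨_, rfl⟩
    have hk1m : k1 < m := by rw [hk1d]; split_ifs <;> omega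
    have hk2m : k2 < m := by rw [hk2d]; split_ifs <;> omega
    have hne12 : k1 ≠ k2 := by rw [hk1d, hk2d]; split_ifs <;> omega
    have hne1k : k1 ≠ k := by rw [hk1d]; split_ifs <;> omega
    have hne2k : k2 ≠ k := by rw [hk2d]; split_ifs <;> omega
    have hxk1 : x (k1 + 1) = x k := by
      rw [hk1d]; split_ifs with hh
      · rw [show m - 1 + 1 = m by omega, hxm, hh]
      · rw [show k - 1 + 1 = k by omega]
    have hxk2 : x (k + 1) = x k2 := by
      rw [hk2d]; split_ifs with hh
      · rw [hh, hxm]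
      · rfl
    have husm : ∀ j, j < m → j ≠ k → u j ≤ x k := by
      intro j hj hjk
      have hp := hsum2 j k hj hkm hjk
      rw [hud j, hud k] at hp
      rw [hud j]
      linarith
    rcases eq_or_lt_of_le hs0 with hs | hs
    · -- x k = 0 : the desired conclusion
      refine ⟨k, hkm, hs.symm, ?_⟩
      intro j hj hjk
      have hkmem : k ∈ Finset.range m := Finset.mem_range.mpr hkm
      have he1 : ∑ i ∈ (Finset.range m).erase k, x i + x k = ∑ i ∈ Finset.range m, x i :=
        Finset.sum_erase_add _ _ hkmem
      have hesum : ∑ i ∈ (Finset.range m).erase k, x i = (m:ℝ) - 1 := by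
        rw [hsum] at he1; rw [← hs] at he1; linarith
      have hzero : ∑ i ∈ (Finset.range m).erase k, (1 - x i) = 0 := by
        rw [Finset.sum_sub_distrib, Finset.sum_const, Finset.card_erase_of_mem hkmem,
          Finset.card_range, hesum, nsmul_eq_mul, mul_one]
        have hc : ((m - 1 : ℕ) : ℝ) = (m:ℝ) - 1 := by
          push_cast [Nat.cast_sub (by omega : 1 ≤ m)]; ring
        rw [hc]; ring
      have hall := (Finset.sum_eq_zero_iff_of_nonneg
        (fun i _ => by linarith [h1 i])).mp hzero j
        (by simp [Finset.mem_erase, hjk, Finset.mem_range, hj])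
      linarith
    · -- 0 < x k : contradiction
      exfalso
      have hu1s : u k1 ≤ x k := husm k1 hk1m hne1k
      have hu2s : u k2 ≤ x k := husm k2 hk2m hne2k
      have hu12 : u k1 + u k2 ≤ x k := by
        have h3 := hsum3 k1 k2 k hk1m hk2m hkm hne12 hne1k hne2k
        rw [hud k] at h3
        linarith
      have hacs : Real.arccos (x k) + Real.arcsin (x k) = π/2 := by
        rw [Real.arccos_eq_pi_div_two_sub_arcsin]; ring
      have hsin0 : 0 ≤ Real.arcsin (x k) := Real.arcsin_nonneg.mpr hs0
      have hck1 : Real.arccos (x k) + u k1 * Real.arcsin (x k) ≤ c k1 := by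
        have hcon := arccos_concave (a := x k) (b := 0) (t := u k1) hs0 hs1 le_rfl zero_le_one
          (hu0 k1) (hu1 k1)
        rw [Real.arccos_zero] at hcon
        have he : (1 - u k1) * x k + u k1 * 0 = x k1 * x (k1+1) := by
          rw [hxk1, hud k1]; ring
        rw [he] at hcon
        have he2 : (1 - u k1) * Real.arccos (x k) + u k1 * (π/2)
            = Real.arccos (x k) + u k1 * Real.arcsin (x k) := by
          linear_combination (-(u k1)) * hacs
        rw [hcd k1]
        linarith
      have hck2 : Real.arccos (x k) + u k2 * Real.arcsin (x k) ≤ c k := by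
        have hcon := arccos_concave (a := x k) (b := 0) (t := u k2) hs0 hs1 le_rfl zero_le_one
          (hu0 k2) (hu1 k2)
        rw [Real.arccos_zero] at hcon
        have he : (1 - u k2) * x k + u k2 * 0 = x k * x (k+1) := by
          rw [hxk2, hud k2]; ring
        rw [he] at hcon
        have he2 : (1 - u k2) * Real.arccos (x k) + u k2 * (π/2)
            = Real.arccos (x k) + u k2 * Real.arcsin (x k) := by
          linear_combination (-(u k2)) * hacs
        rw [hcd k]
        linarith
      have hk1mem : k1 ∈ Finset.range m := Finset.mem_range.mpr hk1m
      have hkmem' : k ∈ (Finset.range m).erase k1 := by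
        simp [Finset.mem_erase, Ne.symm hne1k, Finset.mem_range, hkm]
      have e1c := Finset.sum_erase_add (Finset.range m) c hk1mem
      have e2c := Finset.sum_erase_add ((Finset.range m).erase k1) c hkmem'
      have hsplitR : ∑ i ∈ ((Finset.range m).erase k1).erase k, c i = π - c k1 - c k := by
        rw [heqc] at e1c
        linarith [e1c, e2c]
      have hRu : ∑ i ∈ ((Finset.range m).erase k1).erase k, u i = 1 - u k1 - u k := by
        have e1 := Finset.sum_erase_add (Finset.range m) u hk1mem
        have e2 := Finset.sum_erase_add ((Finset.range m).erase k1) u hkmem'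
        rw [husum] at e1
        linarith [e1, e2]
      have hRu' : ∑ i ∈ ((Finset.range m).erase k1).erase k, u (i+1) = 1 - u k - u k2 := by
        have e1 := Finset.sum_erase_add (Finset.range m) (fun i => u (i+1)) hk1mem
        have e2 := Finset.sum_erase_add ((Finset.range m).erase k1) (fun i => u (i+1)) hkmem'
        rw [husum'] at e1
        have hv1 : u (k1+1) = u k := by rw [hud (k1+1), hud k, hxk1]
        have hv2 : u (k+1) = u k2 := by rw [hud (k+1), hud k2, hxk2]
        rw [hv1] at e1
        rw [hv2] at e2
        linarith [e1, e2]
      obtain ⟨W, hWd⟩ : ∃ W : ℝ, W = ∑ i ∈ ((Finset.range m).erase k1).erase k,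
          (3/4 * (u i + u (i+1))) := ⟨_, rfl⟩
      have hWval : W = 3/4 * (2 * x k - u k1 - u k2) := by
        rw [hWd, ← Finset.mul_sum, Finset.sum_add_distrib, hRu, hRu']
        rw [hud k]; ring
      have hW0 : 0 < W := by rw [hWval]; linarith only [hu12, hs]
      have hWle : W ≤ 3/4 := by rw [hWval]; linarith only [hu0 k1, hu0 k2, hkha, hu12]
      have hWne : W ≠ 0 := ne_of_gt hW0
      have hterm : ∀ i ∈ ((Finset.range m).erase k1).erase k,
          (3/4 * (u i + u (i+1))) / W * Real.arccos (1 - W) ≤ c i := by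
        intro i hiR
        have hik : i ≠ k := (Finset.mem_erase.mp hiR).1
        have hik1 : i ≠ k1 := (Finset.mem_erase.mp ((Finset.mem_erase.mp hiR).2)).1
        have hiRm : i < m :=
          Finset.mem_range.mp (Finset.mem_erase.mp ((Finset.mem_erase.mp hiR).2)).2
        have hui : u i ≤ x k := husm i hiRm hik
        have hui1 : u (i+1) ≤ x k := by
          rcases Nat.lt_or_ge (i+1) m with hlt | hge
          · apply husm (i+1) hlt
            intro hcon
            apply hik1
            rw [hk1d]
            split_ifs <;> omega
          · have him : i + 1 = m := by omega
            have hre : u (i+1) = u 0 := by rw [him, hum]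
            rw [hre]
            have hk0 : k ≠ 0 := by
              intro hz
              apply hik1
              rw [hk1d, if_pos hz]
              omega
            exact husm 0 (by omega) (Ne.symm hk0)
        have hprod : x i * x (i+1) ≤ 1 - 3/4 * (u i + u (i+1)) := by
          have ea : x i = 1 - u i := by rw [hud i]; ring
          have eb : x (i+1) = 1 - u (i+1) := by rw [hud (i+1)]; ring
          rw [ea, eb]
          nlinarith [hu0 i, hu0 (i+1), mul_nonneg (hu0 i) (hu0 (i+1))]
        have hw0 : 0 ≤ 3/4 * (u i + u (i+1)) := by nlinarith [hu0 i, hu0 (i+1)]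
        have hwW : 3/4 * (u i + u (i+1)) ≤ W := by
          rw [hWd]
          exact Finset.single_le_sum (f := fun j => 3/4 * (u j + u (j+1)))
            (fun j _ => by nlinarith [hu0 j, hu0 (j+1)]) hiR
        have ht1' : (3/4 * (u i + u (i+1))) / W ≤ 1 := by
          rw [div_le_one hW0]; exact hwW
        have ht0' : 0 ≤ (3/4 * (u i + u (i+1))) / W := div_nonneg hw0 hW0.le
        have hcon := arccos_concave (a := 1) (b := 1 - W) (t := (3/4 * (u i + u (i+1)))/W)
          zero_le_one le_rfl (by linarith) (by linarith) ht0' ht1'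
        rw [Real.arccos_one] at hcon
        have he : (1 - (3/4 * (u i + u (i+1)))/W) * 1 + ((3/4 * (u i + u (i+1)))/W) * (1 - W)
            = 1 - 3/4 * (u i + u (i+1)) := by
          field_simp
          ring
        rw [he] at hcon
        simp only [mul_zero, zero_add] at hcon
        have hmono : Real.arccos (1 - 3/4 * (u i + u (i+1))) ≤ Real.arccos (x i * x (i+1)) :=
          arccos_antitone hprod
        rw [hcd i]
        linarith [hcon, hmono]
      have hRsum : Real.arccos (1 - W) ≤ ∑ i ∈ ((Finset.range m).erase k1).erase k, c i := by
        have hle := Finset.sum_le_sum hterm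
        have heval : ∑ i ∈ ((Finset.range m).erase k1).erase k,
            (3/4 * (u i + u (i+1))) / W * Real.arccos (1 - W) = Real.arccos (1 - W) := by
          rw [← Finset.sum_mul, ← Finset.sum_div, ← hWd, div_self hWne, one_mul]
        linarith [hle, heval]
      obtain ⟨lam, hlamd⟩ : ∃ lam : ℝ, lam = (u k1 + u k2) / (x k) := ⟨_, rfl⟩
      have hlam0 : 0 ≤ lam := by
        rw [hlamd]
        exact div_nonneg (by nlinarith [hu0 k1, hu0 k2]) hs.le
      have hlam1 : lam ≤ 1 := by rw [hlamd, div_le_one hs]; linarith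
      have hlameq : u k1 + u k2 = lam * x k := by rw [hlamd]; field_simp
      have hWlam : 1 - W = (1 - lam) * (1 - 3*(x k)/2) + lam * (1 - 3*(x k)/4) := by
        rw [hWval]
        linear_combination (3/4 : ℝ) * hlameq
      have hconc2 : (1-lam) * Real.arccos (1 - 3*(x k)/2) + lam * Real.arccos (1 - 3*(x k)/4)
          ≤ Real.arccos (1 - W) := by
        have hq := arccos_concave (a := 1 - 3*(x k)/2) (b := 1 - 3*(x k)/4) (t := lam)
          (by linarith) (by linarith) (by linarith) (by linarith) hlam0 hlam1
        rw [← hWlam] at hq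
        exact hq
      have hc1 := claim1 hs hkha
      have hc2 := claim2 hs hkha
      have hcomb : 2 * Real.arcsin (x k) <
          (1-lam) * Real.arccos (1 - 3*(x k)/2)
            + lam * (Real.arccos (1 - 3*(x k)/4) + x k * Real.arcsin (x k)) := by
        rcases lt_or_eq_of_le hlam1 with hl | hl
        · have t1 : 0 < (1-lam) * (Real.arccos (1 - 3*(x k)/2) - 2*Real.arcsin (x k)) :=
            mul_pos (by linarith only [hl]) (by linarith only [hc1])
          have t2 : 0 ≤ lam * (Real.arccos (1 - 3*(x k)/4) + x k * Real.arcsin (x k)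
              - 2*Real.arcsin (x k)) :=
            mul_nonneg hlam0 (by linarith only [hc2])
          linarith only [t1, t2]
        · rw [hl]
          linarith only [hc2]
      have e1l : (u k1 + u k2) * Real.arcsin (x k) = lam * (x k) * Real.arcsin (x k) := by
        rw [hlameq]
      have hfin : π < c k1 + c k + ∑ i ∈ ((Finset.range m).erase k1).erase k, c i := by
        linarith only [hck1, hck2, hRsum, hconc2, hcomb, e1l, hacs]
      rw [hsplitR] at hfin
      linarith
  · -- all x j > 1/2 : contradiction
    exfalso
    push_neg at hex
    have hbound1 : ∀ i ∈ Finset.range m,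
        (1 - u (i+1)) * Real.arccos (x i) + u (i+1) * (π/2) ≤ c i := by
      intro i _
      have hcon := arccos_concave (a := x i) (b := 0) (t := u (i+1)) (h0 i) (h1 i) le_rfl
        zero_le_one (hu0 _) (hu1 _)
      rw [Real.arccos_zero] at hcon
      have he : (1 - u (i+1)) * x i + u (i+1) * 0 = x i * x (i+1) := by
        rw [hud (i+1)]; ring
      rw [he] at hcon
      rw [hcd i]
      exact hcon
    have hS1 : ∑ i ∈ Finset.range m, (1 - u (i+1)) * Real.arccos (x i) ≤ π/2 := by
      have hle := Finset.sum_le_sum hbound1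
      rw [heqc, Finset.sum_add_distrib, ← Finset.sum_mul, husum', one_mul] at hle
      linarith
    have hbound2 : ∀ i ∈ Finset.range m,
        (1 - u i) * Real.arccos (x (i+1)) + u i * (π/2) ≤ c i := by
      intro i _
      have hcon := arccos_concave (a := x (i+1)) (b := 0) (t := u i) (h0 _) (h1 _) le_rfl
        zero_le_one (hu0 _) (hu1 _)
      rw [Real.arccos_zero] at hcon
      have he : (1 - u i) * x (i+1) + u i * 0 = x i * x (i+1) := by
        rw [hud i]; ring
      rw [he] at hcon
      rw [hcd i]
      exact hcon
    have hS2 : ∑ i ∈ Finset.range m, (1 - u i) * Real.arccos (x (i+1)) ≤ π/2 := by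
      have hle := Finset.sum_le_sum hbound2
      rw [heqc, Finset.sum_add_distrib, ← Finset.sum_mul, husum, one_mul] at hle
      linarith
    have hS2' : ∑ j ∈ Finset.range m, (1 - u (j + (m-1))) * Real.arccos (x j) ≤ π/2 := by
      have hgm : (fun j => (1 - u (j + (m-1))) * Real.arccos (x j)) m
          = (fun j => (1 - u (j + (m-1))) * Real.arccos (x j)) 0 := by
        simp only
        rw [show m + (m-1) = (m-1) + m by omega, huper (m-1), hxm]
        norm_num
      have hshift := sum_shift m (fun j => (1 - u (j + (m-1))) * Real.arccos (x j)) hgm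
      have e2 : ∑ i ∈ Finset.range m, (fun j => (1 - u (j + (m-1))) * Real.arccos (x j)) (i+1)
          = ∑ i ∈ Finset.range m, (1 - u i) * Real.arccos (x (i+1)) := by
        apply Finset.sum_congr rfl
        intro i _
        simp only
        rw [show (i+1) + (m-1) = i + m by omega, huper i]
      rw [e2] at hshift
      rw [← hshift]
      exact hS2
    have hcoef : ∀ j ∈ Finset.range m, (1 + u j) * Real.arccos (x j)
        ≤ (1 - u (j+1)) * Real.arccos (x j) + (1 - u (j + (m-1))) * Real.arccos (x j) := by
      intro j hj
      have hjm := Finset.mem_range.mp hj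
      have harc : 0 ≤ Real.arccos (x j) := Real.arccos_nonneg _
      have hua : u (j+1) = u (if j + 1 = m then 0 else j+1) := by
        split_ifs with hh
        · rw [hh, hum]
        · rfl
      have hub : u (j + (m-1)) = u (if j = 0 then m-1 else j-1) := by
        split_ifs with hh
        · rw [hh]; norm_num
        · rw [show j + (m-1) = (j-1) + m by omega, huper]
      have h3 := hsum3 (if j + 1 = m then 0 else j+1) (if j = 0 then m-1 else j-1) j
        (by split_ifs <;> omega) (by split_ifs <;> omega) hjm
        (by split_ifs <;> omega) (by split_ifs <;> omega) (by split_ifs <;> omega)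
      rw [← hua, ← hub] at h3
      nlinarith [h3, harc, mul_nonneg harc
        (by linarith : (0:ℝ) ≤ 1 - (u (j+1) + u (j + (m-1)) + u j))]
    have hmain : ∑ j ∈ Finset.range m, (1 + u j) * Real.arccos (x j) ≤ π := by
      have hle := Finset.sum_le_sum hcoef
      rw [Finset.sum_add_distrib] at hle
      linarith [hS1, hS2']
    have hpoint : ∀ j ∈ Finset.range m, π * u j ≤ (1 + u j) * Real.arccos (x j) := by
      intro j hj
      have hjm := Finset.mem_range.mp hj
      rcases eq_or_lt_of_le (hu0 j) with hz | hz
      · have hx1 : x j = 1 := by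
          rw [hud j] at hz; linarith
        rw [hx1, Real.arccos_one, ← hz]
        simp
      · have hhalf : u j < 1/2 := by
          have := hex j hjm
          rw [hud j]
          linarith
        have hH := H1 hz hhalf
        have hxj : (1 : ℝ) - u j = x j := by rw [hud j]; ring
        rw [hxj] at hH
        linarith
    obtain ⟨j0, hj0m, hj0⟩ : ∃ j0 ∈ Finset.range m, 0 < u j0 := by
      by_contra hcon
      push_neg at hcon
      have hnp : ∑ i ∈ Finset.range m, u i ≤ 0 :=
        Finset.sum_nonpos (fun i hi => hcon i hi)
      rw [husum] at hnp; linarith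
    have hstrict : π * u j0 < (1 + u j0) * Real.arccos (x j0) := by
      have hhalf : u j0 < 1/2 := by
        have := hex j0 (Finset.mem_range.mp hj0m)
        rw [hud j0]
        linarith
      have hH := H1 hj0 hhalf
      have hxj : (1 : ℝ) - u j0 = x j0 := by rw [hud j0]; ring
      rw [hxj] at hH
      exact hH
    have hlt : ∑ j ∈ Finset.range m, π * u j
        < ∑ j ∈ Finset.range m, (1 + u j) * Real.arccos (x j) :=
      Finset.sum_lt_sum hpoint ⟨j0, hj0m, hstrict⟩
    rw [← Finset.mul_sum, husum, mul_one] at hlt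
    linarith

end
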